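/- Let d ≥ 2 be an integer, t > 0, and 0 < r < r_crit = (d·t)^{−1/(d−1)}. Set x* = (d+1)·d^{−d/(d+1)}·t^{1/(d+1)}·r^{2d/(d+1)}. Then for every w ∈ ℂ with |w| > ρ, the point ψ(w) does not lie on the (d+1)-star Σ₁* = {z ∈ ℂ : z^{d+1} is a real number with 0 ≤ z^{d+1} ≤ (x*)^{d+1}}; equivalently, ψ(w)^{d+1} is not a real number in the interval [0, (x*)^{d+1}]. -/

import Mathlib

open Complex

/-- The map `ψ(w) = r·w + t·r^d·w^{-d}`. -/
noncomputable def psi (d : ℕ) (r t : ℝ) (w : ℂ) : ℂ :=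
  (r : ℂ) * w + (t : ℂ) * (r : ℂ) ^ d / w ^ d

/-- `ρ = (d·t·r^{d-1})^{1/(d+1)}`. -/
noncomputable def rho (d : ℕ) (r t : ℝ) : ℝ :=
  ((d : ℝ) * t * r ^ (d - 1)) ^ ((1 : ℝ) / ((d : ℝ) + 1))

/-- `x* = (d+1)·d^{-d/(d+1)}·t^{1/(d+1)}·r^{2d/(d+1)}`. -/
noncomputable def xstar (d : ℕ) (r t : ℝ) : ℝ :=
  ((d : ℝ) + 1) * (d : ℝ) ^ (-(d : ℝ) / ((d : ℝ) + 1)) * t ^ ((1 : ℝ) / ((d : ℝ) + 1))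
    * r ^ (2 * (d : ℝ) / ((d : ℝ) + 1))

lemma im_pow_le (z : ℂ) : ∀ n : ℕ, |(z ^ (n + 1)).im| ≤ ((n : ℝ) + 1) * ‖z‖ ^ n * |z.im| := by
  intro n
  induction n with
  | zero => simp
  | succ n ih =>
    have h1 : (z ^ (n + 2)).im = (z ^ (n + 1)).re * z.im + (z ^ (n + 1)).im * z.re := by
      rw [pow_succ, Complex.mul_im]
    have h2 : |(z ^ (n + 1)).re| ≤ ‖z‖ ^ (n + 1) := by
      simpa [norm_pow] using Complex.abs_re_le_norm (z ^ (n + 1))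
    have h3 : |z.re| ≤ ‖z‖ := Complex.abs_re_le_norm z
    calc |(z ^ (n + 2)).im| ≤ |(z ^ (n + 1)).re| * |z.im| + |(z ^ (n + 1)).im| * |z.re| := by
          rw [h1]; exact (abs_add_le _ _).trans (by rw [abs_mul, abs_mul])
      _ ≤ ‖z‖ ^ (n + 1) * |z.im| + (((n : ℝ) + 1) * ‖z‖ ^ n * |z.im|) * ‖z‖ := by
          gcongr
      _ = ((n : ℝ) + 1 + 1) * ‖z‖ ^ (n + 1) * |z.im| := by ring
      _ = (((n:ℕ)+1 : ℕ) + 1 : ℝ) * ‖z‖ ^ (n + 1) * |z.im| := by push_cast; ring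

lemma pow_sub_pow_le'' (a b : ℝ) (hb : 0 ≤ b) (hba : b ≤ a) :
    ∀ n : ℕ, a ^ (n + 1) - b ^ (n + 1) ≤ ((n : ℝ) + 1) * a ^ n * (a - b) := by
  intro n
  induction n with
  | zero => simp
  | succ n ih =>
    have ha : 0 ≤ a := hb.trans hba
    have h2 : b ^ (n + 1) ≤ a ^ (n + 1) := pow_le_pow_left₀ hb hba _
    have h3 : 0 ≤ a ^ n := pow_nonneg ha n
    have key : a ^ (n + 2) - b ^ (n + 2) = a * (a ^ (n+1) - b ^ (n+1)) + b ^ (n+1) * (a - b) := by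
      ring
    rw [key]
    have h4 : a * (a ^ (n+1) - b ^ (n+1)) ≤ a * (((n : ℝ) + 1) * a ^ n * (a - b)) :=
      mul_le_mul_of_nonneg_left ih ha
    have h5 : b ^ (n+1) * (a - b) ≤ a ^ (n+1) * (a - b) :=
      mul_le_mul_of_nonneg_right h2 (sub_nonneg.mpr hba)
    have h6 : a * (((n : ℝ) + 1) * a ^ n * (a - b)) = ((n : ℝ) + 1) * a ^ (n+1) * (a - b) := by ring
    push_cast
    nlinarith [h4, h5, h6]

/-- For `|w| > ρ` in the subcritical regime, `ψ(w)` does not lie on the `(d+1)`-star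
`Σ₁* = {z : z^{d+1} ∈ [0, (x*)^{d+1}]}`: that is, `ψ(w)^{d+1}` is not a real number in
the interval `[0, (x*)^{d+1}]`. -/
theorem stmt5 (d : ℕ) (hd : 2 ≤ d) (t r : ℝ) (ht : 0 < t) (hr0 : 0 < r)
    (hrcrit : r < ((d : ℝ) * t) ^ (-1 / ((d : ℝ) - 1)))
    (w : ℂ) (hw : rho d r t < ‖w‖)
    (s : ℝ) (hs0 : 0 ≤ s) (hs1 : s ≤ xstar d r t ^ (d + 1)) :
    psi d r t w ^ (d + 1) ≠ (s : ℂ) := by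
  obtain ⟨m, rfl⟩ : ∃ m, d = m + 2 := ⟨d - 2, by omega⟩
  clear hd hrcrit
  intro h
  have hsub : m + 2 - 1 = m + 1 := rfl
  set ρ := rho (m+2) r t with hρdef
  have hDcast : ((m+2 : ℕ) : ℝ) = (m : ℝ) + 2 := by push_cast; ring
  have hP : (0:ℝ) < ((m+2 : ℕ) : ℝ) * t * r ^ (m+1) := by positivity
  have hρ0 : 0 < ρ := by
    rw [hρdef, rho, hsub]; exact Real.rpow_pos_of_pos hP _
  have hρpow : ρ ^ (m+3) = ((m+2 : ℕ) : ℝ) * t * r ^ (m+1) := by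
    rw [hρdef, rho, hsub, ← Real.rpow_natCast _ (m+3), ← Real.rpow_mul hP.le]
    rw [show ((1:ℝ) / (((m+2:ℕ):ℝ) + 1)) * ((m+3 : ℕ) : ℝ) = 1 by
      push_cast; field_simp; ring]
    exact Real.rpow_one _
  have hw0 : w ≠ 0 := by
    intro h0
    rw [h0, norm_zero] at hw
    exact absurd hw (not_lt.mpr hρ0.le)
  have hwd : w ^ (m+2) ≠ 0 := pow_ne_zero _ hw0
  have hA : ρ < ‖w‖ := hw
  have hApow : ρ ^ (m+3) < ‖w‖ ^ (m+3) :=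
    pow_lt_pow_left₀ hA hρ0.le (by omega)
  have hs : ‖psi (m+2) r t w‖ ^ (m+2+1) = s := by
    rw [← norm_pow, h, Complex.norm_real, Real.norm_eq_abs, _root_.abs_of_nonneg hs0]
  set x := ‖psi (m+2) r t w‖ with hxdef
  by_cases hz : psi (m+2) r t w = 0
  · have hz' : (r:ℂ) * w ^ (m+3) = -((t:ℂ) * (r:ℂ)^(m+2)) := by
      have := hz
      rw [psi] at this
      field_simp at this
      linear_combination this
    have habs : r * ‖w‖ ^ (m+3) = t * r ^ (m+2) := by
      have := congrArg (‖·‖) hz'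
      simpa [norm_mul, norm_pow, Complex.norm_real, Real.norm_eq_abs, abs_of_pos hr0, abs_of_pos ht] using this
    have h1 : r * ρ^(m+3) < r * ‖w‖ ^(m+3) := mul_lt_mul_of_pos_left hApow hr0
    rw [hρpow, hDcast, habs] at h1
    have h2 : r * (((m:ℝ)+2)*t*r^(m+1)) = ((m:ℝ)+2) * (t * r^(m+2)) := by ring
    rw [h2] at h1
    have hp : 0 < t * r^(m+2) := by positivity
    linarith [mul_nonneg (Nat.cast_nonneg m : (0:ℝ) ≤ (m:ℝ)) hp.le]
  · have hx0 : 0 < x := (norm_pos_iff.mpr hz)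
    have hsx : s = x ^ (m+3) := by rw [← hs]
    have hs0' : 0 < s := by rw [hsx]; positivity
    have hxC : (x:ℂ) ≠ 0 := by exact_mod_cast hx0.ne'
    obtain ⟨ζ, hζabs, hζpow, hpsiw⟩ :
        ∃ ζ : ℂ, ‖ζ‖ = 1 ∧ ζ ^ (m+3) = 1 ∧ psi (m+2) r t w = ζ * (x:ℂ) := by
      refine ⟨psi (m+2) r t w / (x:ℂ), ?_, ?_, ?_⟩
      · rw [norm_div, Complex.norm_real, Real.norm_eq_abs, _root_.abs_of_pos hx0, ← hxdef, div_self hx0.ne']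
      · rw [div_pow, show m+3 = m+2+1 from rfl, h, ← Complex.ofReal_pow, ← hsx,
          div_self (by exact_mod_cast hs0'.ne')]
      · rw [div_mul_cancel₀ _ hxC]
    have hζ0 : ζ ≠ 0 := by
      intro h0; rw [h0, norm_zero] at hζabs; norm_num at hζabs
    have hζinv : ζ ^ (m+2) = ζ⁻¹ := by
      have hmul : ζ ^ (m+2) * ζ = 1 := by
        rw [← pow_succ]; exact hζpow
      exact eq_inv_of_mul_eq_one_left hmul
    obtain ⟨u, hudef⟩ : ∃ u : ℂ, u = w / ζ := ⟨_, rfl⟩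
    have hu0 : u ≠ 0 := hudef ▸ div_ne_zero hw0 hζ0
    have huabs : ‖u‖ = ‖w‖ := by
      rw [hudef, norm_div, hζabs, div_one]
    have hud : u ^ (m+2) ≠ 0 := pow_ne_zero _ hu0
    have hψu : psi (m+2) r t u = (x:ℂ) := by
      have step : psi (m+2) r t u = ζ⁻¹ * psi (m+2) r t w := by
        rw [psi, psi, hudef, div_pow, div_div_eq_mul_div, hζinv]
        field_simp
      rw [step, hpsiw, ← mul_assoc, inv_mul_cancel₀ hζ0, one_mul]
    -- u is real
    have him : u.im = 0 := by
      by_contra him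
      have himabs : 0 < |u.im| := abs_pos.mpr him
      have hN : 0 < Complex.normSq (u^(m+2)) := Complex.normSq_pos.mpr hud
      have h1 : r * u.im + (t * r^(m+2)) * ((u^(m+2))⁻¹).im = 0 := by
        have := congrArg Complex.im hψu
        rw [psi, div_eq_mul_inv] at this
        simpa [Complex.add_im, Complex.ofReal_im, Complex.mul_im, Complex.mul_re,
          Complex.ofReal_re, ← Complex.ofReal_pow, ← Complex.ofReal_mul] using this
      have h2 : ((u^(m+2))⁻¹).im = -((u^(m+2)).im) / Complex.normSq (u^(m+2)) :=
        Complex.inv_im _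
      have h3 : Complex.normSq (u^(m+2)) = ‖u‖^(m+2) * ‖u‖^(m+2) := by
        rw [Complex.normSq_eq_norm_sq, norm_pow, sq]
      have h4 : |(u^(m+2)).im| ≤ ((m:ℝ)+2) * ‖u‖ ^ (m+1) * |u.im| := by
        have hle := im_pow_le u (m+1)
        push_cast at hle
        calc |(u^(m+2)).im| = |(u^(m+1+1)).im| := by norm_num
          _ ≤ ((m:ℝ)+1+1) * ‖u‖ ^ (m+1) * |u.im| := hle
          _ = ((m:ℝ)+2) * ‖u‖ ^ (m+1) * |u.im| := by ring
      have h1' : r * u.im = t * r^(m+2) * (u^(m+2)).im / Complex.normSq (u^(m+2)) := by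
        rw [h2] at h1
        linear_combination h1
      have h5 : r * u.im * Complex.normSq (u^(m+2)) = t * r^(m+2) * (u^(m+2)).im := by
        rw [eq_comm, div_eq_iff hN.ne'] at h1'
        linarith [h1']
      have h6 : r * |u.im| * (‖u‖^(m+2) * ‖u‖^(m+2))
          = t * r^(m+2) * |(u^(m+2)).im| := by
        have := congrArg (fun y : ℝ => |y|) h5
        simp only [abs_mul] at this
        rw [_root_.abs_of_pos hr0, _root_.abs_of_pos ht, _root_.abs_of_pos (pow_pos hr0 (m+2)),
          _root_.abs_of_pos hN, h3] at this
        linarith [this]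
      have h7 : r * (‖u‖^(m+2) * ‖u‖^(m+2)) * |u.im|
          ≤ t * r^(m+2) * (((m:ℝ)+2) * ‖u‖^(m+1)) * |u.im| := by
        calc r * (‖u‖^(m+2) * ‖u‖^(m+2)) * |u.im|
            = r * |u.im| * (‖u‖^(m+2) * ‖u‖^(m+2)) := by ring
          _ = t * r^(m+2) * |(u^(m+2)).im| := h6
          _ ≤ t * r^(m+2) * (((m:ℝ)+2) * ‖u‖^(m+1) * |u.im|) :=
              mul_le_mul_of_nonneg_left h4 (by positivity)
          _ = t * r^(m+2) * (((m:ℝ)+2) * ‖u‖^(m+1)) * |u.im| := by ring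
      have h7' := le_of_mul_le_mul_right h7 himabs
      have hAρ : ρ^(m+3) < ‖u‖^(m+3) := by rw [huabs]; exact hApow
      rw [hρpow, hDcast] at hAρ
      have h8 : (((m:ℝ)+2)*t*r^(m+1)) * (r * ‖u‖^(m+1))
          < ‖u‖^(m+3) * (r * ‖u‖^(m+1)) := by
        apply mul_lt_mul_of_pos_right hAρ
        have := norm_pos_iff.mpr hu0
        positivity
      have h9 : ‖u‖^(m+3) * (r * ‖u‖^(m+1))
          = r * (‖u‖^(m+2) * ‖u‖^(m+2)) := by ring
      have h10 : (((m:ℝ)+2)*t*r^(m+1)) * (r * ‖u‖^(m+1))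
          = t * r^(m+2) * (((m:ℝ)+2) * ‖u‖^(m+1)) := by ring
      rw [h9, h10] at h8
      linarith [h7', h8]
    -- u = a real
    obtain ⟨a, hadef⟩ : ∃ a : ℝ, u = (a:ℂ) := by
      refine ⟨u.re, ?_⟩
      apply Complex.ext <;> simp [him]
    have ha0 : a ≠ 0 := by
      intro h0; rw [hadef, h0] at hu0; simp at hu0
    have haabs : |a| = ‖w‖ := by rw [← huabs, hadef, Complex.norm_real, Real.norm_eq_abs]
    have hreal : r * a + t * r^(m+2) / a^(m+2) = x := by
      have hthis := hψu
      rw [hadef, psi] at hthis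
      have hcast : ((r * a + t * r^(m+2) / a^(m+2) : ℝ) : ℂ)
          = (r:ℂ) * (a:ℂ) + (t:ℂ) * (r:ℂ)^(m+2) / (a:ℂ)^(m+2) := by push_cast; ring
      rw [← hcast] at hthis
      exact_mod_cast hthis
    have haρ : ρ < |a| := by rw [haabs]; exact hA
    have had : a^(m+2) ≠ 0 := pow_ne_zero _ ha0
    rcases lt_or_gt_of_ne ha0 with hneg | hpos
    · -- a < 0 : x < 0, contradiction
      have hRa : |a| = -a := abs_of_neg hneg
      have hR : ρ < -a := by rw [← hRa]; exact haρ
      have hR0 : 0 < -a := lt_trans hρ0 hR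
      have hRpow : ρ^(m+3) < (-a)^(m+3) := pow_lt_pow_left₀ hR hρ0.le (by omega)
      rw [hρpow, hDcast] at hRpow
      have hdiv : t * r^(m+2) / a^(m+2) ≤ t * r^(m+2) / (-a)^(m+2) := by
        rcases lt_or_gt_of_ne had with hlt | hgt
        · have hle1 : t * r^(m+2) / a^(m+2) ≤ 0 :=
            div_nonpos_of_nonneg_of_nonpos (by positivity) hlt.le
          have hle2 : (0:ℝ) ≤ t * r^(m+2) / (-a)^(m+2) :=
            div_nonneg (by positivity) (pow_nonneg hR0.le _)
          linarith
        · have heqp : a^(m+2) = (-a)^(m+2) := by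
            have habsp : |a^(m+2)| = (-a)^(m+2) := by rw [_root_.abs_pow, hRa]
            rw [← habsp, _root_.abs_of_pos hgt]
          rw [heqp]
      have h8 : t * r^(m+2) / (-a)^(m+2) < r * (-a) := by
        rw [div_lt_iff₀ (pow_pos hR0 (m+2))]
        have hmul : (((m:ℝ)+2)*t*r^(m+1)) * r < (-a)^(m+3) * r := mul_lt_mul_of_pos_right hRpow hr0
        have e1 : (-a)^(m+3) * r = r * -a * (-a)^(m+2) := by ring
        have e2 : (((m:ℝ)+2)*t*r^(m+1)) * r = ((m:ℝ)+2) * (t * r^(m+2)) := by ring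
        rw [e1, e2] at hmul
        have hp : 0 < t * r^(m+2) := by positivity
        linarith [mul_nonneg (Nat.cast_nonneg m : (0:ℝ) ≤ (m:ℝ)) hp.le]
      have hlt0 : r * a + t * r^(m+2) / a^(m+2) < 0 := by linarith [hdiv, h8]
      rw [hreal] at hlt0
      linarith [hx0]
    · -- a > 0
      have haa : |a| = a := _root_.abs_of_pos hpos
      have haρ' : ρ < a := by rw [← haa]; exact haρ
      have htrd : r * ρ^(m+3) = ((m:ℝ)+2) * (t * r^(m+2)) := by
        rw [hρpow, hDcast]; ring
      have haux : a^(m+2) - ρ^(m+2) ≤ ((m:ℝ)+2) * a^(m+1) * (a - ρ) := by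
        have hle := pow_sub_pow_le'' a ρ hρ0.le haρ'.le (m+1)
        push_cast at hle
        calc a^(m+2) - ρ^(m+2) = a^(m+1+1) - ρ^(m+1+1) := by norm_num
          _ ≤ ((m:ℝ)+1+1) * a^(m+1) * (a - ρ) := hle
          _ = ((m:ℝ)+2) * a^(m+1) * (a - ρ) := by ring
      have hkey : ρ * (a^(m+2) - ρ^(m+2)) < ((m:ℝ)+2) * a^(m+2) * (a - ρ) := by
        have h9 : ρ * (a^(m+2) - ρ^(m+2)) ≤ ρ * (((m:ℝ)+2) * a^(m+1) * (a - ρ)) :=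
          mul_le_mul_of_nonneg_left haux hρ0.le
        have h10 : ρ * (((m:ℝ)+2) * a^(m+1) * (a - ρ)) < a * (((m:ℝ)+2) * a^(m+1) * (a - ρ)) := by
          exact mul_lt_mul_of_pos_right haρ'
            (mul_pos (mul_pos (by positivity : (0:ℝ) < (m:ℝ)+2) (pow_pos hpos (m+1)))
              (sub_pos.mpr haρ'))
        have h11 : a * (((m:ℝ)+2) * a^(m+1) * (a - ρ)) = ((m:ℝ)+2) * a^(m+2) * (a - ρ) := by ring
        linarith [h9, h10, h11.symm.le, h11.le]
      have hρd : (ρ:ℝ)^(m+2) ≠ 0 := (pow_pos hρ0 (m+2)).ne'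
      have hm2 : (0:ℝ) < (m:ℝ)+2 := by positivity
      have e1 : t*r^(m+2)/ρ^(m+2) - t*r^(m+2)/a^(m+2)
          = t*r^(m+2)*(a^(m+2) - ρ^(m+2))/(ρ^(m+2)*a^(m+2)) := by
        field_simp [hρd, had]
      have e2 : t*r^(m+2)*(a^(m+2) - ρ^(m+2))/(ρ^(m+2)*a^(m+2))
          = r*ρ*(a^(m+2) - ρ^(m+2))/(((m:ℝ)+2)*a^(m+2)) := by
        rw [div_eq_div_iff (mul_pos (pow_pos hρ0 (m+2)) (pow_pos hpos (m+2))).ne'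
          (mul_pos hm2 (pow_pos hpos (m+2))).ne']
        linear_combination (-(a^(m+2) - ρ^(m+2)) * a^(m+2)) * htrd
      have e3 : r*ρ*(a^(m+2) - ρ^(m+2))/(((m:ℝ)+2)*a^(m+2)) < r * (a - ρ) := by
        rw [div_lt_iff₀ (mul_pos hm2 (pow_pos hpos (m+2)))]
        have hmm := mul_lt_mul_of_pos_left hkey hr0
        have g1 : r*(ρ*(a^(m+2) - ρ^(m+2))) = r*ρ*(a^(m+2) - ρ^(m+2)) := by ring
        have g2 : r*(((m:ℝ)+2)*a^(m+2)*(a-ρ)) = r*(a-ρ)*(((m:ℝ)+2)*a^(m+2)) := by ring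
        rw [g1, g2] at hmm
        exact hmm
      have hmono : r * ρ + t * r^(m+2) / ρ^(m+2) < r * a + t * r^(m+2) / a^(m+2) := by
        linarith [e1, e2, e3]
      -- X and its power
      have hrρ : r * ρ = ((m:ℝ)+2) * (t * r^(m+2)) / ρ^(m+2) := by
        rw [eq_div_iff hρd]
        linear_combination htrd
      have hX2 : r * ρ + t * r^(m+2) / ρ^(m+2) = ((m:ℝ)+3) * (t * r^(m+2)) / ρ^(m+2) := by
        rw [hrρ]; ring
      have hX0 : 0 < r * ρ + t * r^(m+2) / ρ^(m+2) :=
        add_pos (mul_pos hr0 hρ0) (div_pos (by positivity) (pow_pos hρ0 (m+2)))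
      have hXpow : (r * ρ + t * r^(m+2) / ρ^(m+2)) ^ (m+3)
          = ((m:ℝ)+3)^(m+3) * t * r^(2*(m+2)) / ((m:ℝ)+2)^(m+2) := by
        rw [hX2, div_pow, mul_pow]
        have hρe : (ρ^(m+2))^(m+3) = (((m:ℝ)+2) * t * r^(m+1))^(m+2) := by
          rw [← pow_mul, mul_comm (m+2) (m+3), pow_mul, hρpow, hDcast]
        rw [hρe]
        rw [div_eq_div_iff (pow_pos (by positivity : (0:ℝ) < ((m:ℝ)+2)*t*r^(m+1)) (m+2)).ne' (pow_pos (by positivity : (0:ℝ) < (m:ℝ)+2) (m+2)).ne']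
        rw [mul_pow, mul_pow, mul_pow]
        have er : (r^(m+2))^(m+3) = r^(2*(m+2)) * (r^(m+1))^(m+2) := by
          rw [← pow_mul, ← pow_mul, ← pow_add]
          congr 1
          ring
        have et : (t:ℝ)^(m+3) = t * t^(m+2) := by
          rw [pow_succ']
        rw [er, et]
        ring
      -- xstar power
      have hc3 : (0:ℝ) < (m:ℝ)+3 := by positivity
      have hxspow : xstar (m+2) r t ^ (m+3)
          = ((m:ℝ)+3)^(m+3) * t * r^(2*(m+2)) / ((m:ℝ)+2)^(m+2) := by
        rw [xstar, hDcast]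
        rw [show ((m:ℝ)+2)+1 = (m:ℝ)+3 from by ring]
        rw [mul_pow, mul_pow, mul_pow]
        have e1' : (((m:ℝ)+2) ^ (-((m:ℝ)+2)/((m:ℝ)+3))) ^ (m+3) = (((m:ℝ)+2)^(m+2))⁻¹ := by
          rw [← Real.rpow_natCast (((m:ℝ)+2) ^ (-((m:ℝ)+2)/((m:ℝ)+3))) (m+3),
            ← Real.rpow_mul hm2.le]
          rw [show (-((m:ℝ)+2)/((m:ℝ)+3)) * ((m+3 : ℕ) : ℝ) = -((m+2 : ℕ) : ℝ) from by
            push_cast; field_simp]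
          rw [Real.rpow_neg hm2.le, Real.rpow_natCast]
        have e2' : (t ^ ((1:ℝ)/((m:ℝ)+3))) ^ (m+3) = t := by
          rw [← Real.rpow_natCast (t ^ ((1:ℝ)/((m:ℝ)+3))) (m+3), ← Real.rpow_mul ht.le]
          rw [show ((1:ℝ)/((m:ℝ)+3)) * ((m+3 : ℕ) : ℝ) = 1 from by push_cast; field_simp]
          exact Real.rpow_one t
        have e3' : (r ^ (2*((m:ℝ)+2)/((m:ℝ)+3))) ^ (m+3) = r^(2*(m+2)) := by
          rw [← Real.rpow_natCast (r ^ (2*((m:ℝ)+2)/((m:ℝ)+3))) (m+3), ← Real.rpow_mul hr0.le]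
          rw [show (2*((m:ℝ)+2)/((m:ℝ)+3)) * ((m+3 : ℕ) : ℝ) = ((2*(m+2) : ℕ) : ℝ) from by
            push_cast; field_simp]
          exact Real.rpow_natCast r _
        rw [e1', e2', e3']
        field_simp
      -- conclude
      have hXx : r * ρ + t * r^(m+2) / ρ^(m+2) < x := by rw [← hreal]; exact hmono
      have hfinal : s < s := by
        calc s ≤ xstar (m+2) r t ^ (m+2+1) := hs1
          _ = xstar (m+2) r t ^ (m+3) := rfl
          _ = (r * ρ + t * r^(m+2) / ρ^(m+2)) ^ (m+3) := by rw [hxspow, hXpow]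
          _ < x ^ (m+3) := pow_lt_pow_left₀ hXx hX0.le (by omega)
          _ = s := hsx.symm
      exact lt_irrefl s hfinal
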